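/- Let (x_n, y_n, z_n, v_n) be the orbit of the level-3 local structure map L for rule 14 started at (x_0, y_0, z_0, v_0) = (1/2, 1/4, 1/8, 1/8). Then (y_1, z_1) = (3/8, 7/32), and for every n ≥ 1 one has y_{n+1} = 1/2 − y_n + z_n and z_{n+1} = z_n − (4y_n − 1)(y_n − z_n)z_n/y_n; that is, the pair (y_n, z_n) evolves for n ≥ 1 under the reduced map F(y, z) = (1/2 − y + z, z − (4y − 1)(y − z)z/y). -/
import Mathlib


open Filter

/-- Level-3 local structure map for rule 14.  In Lean, division by zero
yields zero, which matches the convention that the fraction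
`v(y-z)z/(y(x-y))` is taken to be `0` whenever `y(x-y) = 0`. -/
noncomputable def L (p : ℝ × ℝ × ℝ × ℝ) : ℝ × ℝ × ℝ × ℝ :=
  match p with
  | (x, y, z, v) =>
    (-x + z + 1,
     -2 * x + y + z + 1,
     1 + z + v - 3 * x + 2 * y - v * (y - z) * z / (y * (x - y)),
     x - 2 * y + z)

/-- Reduced two-dimensional local structure map for rule 14.  In Lean,
division by zero yields zero, matching the convention that the fraction
`(4y-1)(y-z)z/y` is taken to be `0` whenever `y = 0`. -/
noncomputable def F (p : ℝ × ℝ) : ℝ × ℝ :=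
  (1/2 - p.1 + p.2, p.2 - (4 * p.1 - 1) * (p.1 - p.2) * p.2 / p.1)


private lemma L_invariant (p : ℝ × ℝ × ℝ × ℝ) (hx : p.1 = p.2.1 + 1/4)
    (hv : p.2.2.2 = p.2.1 - 1/4) :
    (L p).1 = (L p).2.1 + 1/4 ∧ (L p).2.2.2 = (L p).2.1 - 1/4 := by
  obtain ⟨x, y, z, v⟩ := p
  simp only at hx hv
  subst hx hv
  simp only [L]
  constructor <;> ring

private lemma L_step (p : ℝ × ℝ × ℝ × ℝ) (hx : p.1 = p.2.1 + 1/4)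
    (hv : p.2.2.2 = p.2.1 - 1/4) :
    ((L p).2.1, (L p).2.2.1) = F (p.2.1, p.2.2.1) := by
  obtain ⟨x, y, z, v⟩ := p
  simp only at hx hv
  subst hx hv
  simp only [L, F, Prod.mk.injEq]
  refine ⟨by ring, ?_⟩
  rw [show y + 1/4 - y = 1/4 by ring]
  rcases eq_or_ne y 0 with hy | hy
  · subst hy
    norm_num
    ring
  · have h4 : y * (1/4 : ℝ) ≠ 0 := by simpa using hy
    field_simp
    ring

private lemma orbit_invariant : ∀ n : ℕ, 1 ≤ n →
    (L^[n] (1/2, 1/4, 1/8, 1/8)).1 = (L^[n] (1/2, 1/4, 1/8, 1/8)).2.1 + 1/4 ∧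
    (L^[n] (1/2, 1/4, 1/8, 1/8)).2.2.2 = (L^[n] (1/2, 1/4, 1/8, 1/8)).2.1 - 1/4 := by
  intro n hn
  induction n with
  | zero => omega
  | succ k ih =>
    rcases Nat.eq_or_lt_of_le hn with h | h
    · have hk : k = 0 := by omega
      subst hk
      norm_num [L]
    · have hk : 1 ≤ k := by omega
      obtain ⟨h1, h2⟩ := ih hk
      rw [Function.iterate_succ_apply']
      exact L_invariant _ h1 h2

/-- The `(y, z)` components of the orbit of the level-3 local structure map
started at `(1/2, 1/4, 1/8, 1/8)` satisfy `(y₁, z₁) = (3/8, 7/32)` and, for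
`n ≥ 1`, evolve under the reduced map `F`. -/
theorem local_structure_reduces_to_F :
    ((L^[1] (1/2, 1/4, 1/8, 1/8)).2.1 = 3/8 ∧
     (L^[1] (1/2, 1/4, 1/8, 1/8)).2.2.1 = 7/32) ∧
    (∀ n : ℕ, 1 ≤ n →
      ((L^[n+1] (1/2, 1/4, 1/8, 1/8)).2.1,
       (L^[n+1] (1/2, 1/4, 1/8, 1/8)).2.2.1)
        = F ((L^[n] (1/2, 1/4, 1/8, 1/8)).2.1,
             (L^[n] (1/2, 1/4, 1/8, 1/8)).2.2.1)) := by
  constructor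
  · norm_num [L]
  · intro n hn
    obtain ⟨h1, h2⟩ := orbit_invariant n hn
    rw [Function.iterate_succ_apply']
    exact L_step _ h1 h2
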